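/- arXiv:1911.05936 — 4 statements merged into one kernel-verified Lean document; each statement's English description precedes it below -/
import Mathlib

section
/- Let m and n be integers with m < n ≤ 2m-2. Define an m×n array A on symbols {0,…,m-1} by A(i,j) = i mod m if j ≤ m-2, and A(i,j) = (i+1) mod m if j ≥ m-1. Then A has no transversal; that is, there is no injective function j : {0,…,m-1} → {0,…,n-1} such that the symbols A(i, j(i)) for i = 0,…,m-1 are pairwise distinct. -/
/-- The Drisko-type array: `A m i j = i % m` if `j ≤ m-2`, else `(i+1) % m`. -/
def driskoArray (m n : ℕ) (i : Fin m) (j : Fin n) : ℕ :=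
  if (j : ℕ) ≤ m - 2 then (i : ℕ) % m else ((i : ℕ) + 1) % m

theorem stmt_0 (m n : ℕ) (hmn : m < n) (hn : n ≤ 2 * m - 2) :
    ¬ ∃ j : Fin m → Fin n, Function.Injective j ∧
      Function.Injective (fun i : Fin m => driskoArray m n i (j i)) := by
  rintro ⟨j, hj, hg⟩
  have hm3 : 3 ≤ m := by omega
  haveI : NeZero m := ⟨by omega⟩
  set g : Fin m → ℕ := fun i => driskoArray m n i (j i) with hgdef
  have hglt : ∀ i, g i < m := by
    intro i
    simp only [hgdef, driskoArray]
    split <;> exact Nat.mod_lt _ (by omega)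
  -- the transversal symbols, as elements of ZMod m
  set h : Fin m → ZMod m := fun i => (g i : ZMod m) with hhdef
  have hhinj : Function.Injective h := by
    intro a b hab
    apply hg
    have := congrArg ZMod.val hab
    simpa [hhdef, ZMod.val_cast_of_lt (hglt a), ZMod.val_cast_of_lt (hglt b)] using this
  have hhbij : Function.Bijective h :=
    (Fintype.bijective_iff_injective_and_card h).2 ⟨hhinj, by simp⟩
  have hibij : Function.Bijective (fun i : Fin m => ((i : ℕ) : ZMod m)) := by
    refine (Fintype.bijective_iff_injective_and_card _).2 ⟨?_, by simp⟩
    intro a b hab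
    have := congrArg ZMod.val hab
    simpa [ZMod.val_cast_of_lt a.isLt, ZMod.val_cast_of_lt b.isLt, Fin.val_injective.eq_iff]
      using this
  have hsum1 : ∑ i : Fin m, h i = ∑ x : ZMod m, x :=
    Fintype.sum_bijective h hhbij _ _ (fun i => rfl)
  have hsum2 : ∑ i : Fin m, ((i : ℕ) : ZMod m) = ∑ x : ZMod m, x :=
    Fintype.sum_bijective _ hibij _ _ (fun i => rfl)
  -- ε i = 1 if column of i is in the "late" block
  set ε : Fin m → ℕ := fun i => if (j i : ℕ) ≤ m - 2 then 0 else 1 with hεdef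
  have hkey : ∀ i, h i = ((i : ℕ) : ZMod m) + (ε i : ℕ) := by
    intro i
    simp only [hhdef, hgdef, hεdef, driskoArray]
    split <;> simp [ZMod.natCast_mod]
  have hsumε : ((∑ i : Fin m, ε i : ℕ) : ZMod m) = 0 := by
    have : ∑ i : Fin m, h i = ∑ i : Fin m, (((i : ℕ) : ZMod m) + (ε i : ℕ)) :=
      Finset.sum_congr rfl (fun i _ => hkey i)
    rw [Finset.sum_add_distrib, hsum2] at this
    rw [hsum1] at this
    push_cast
    exact (left_eq_add.mp this)
  have hdvd : m ∣ ∑ i : Fin m, ε i := (ZMod.natCast_eq_zero_iff _ _).1 hsumε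
  -- the sum of ε is the cardinality of the "late" set T
  set T : Finset (Fin m) := Finset.univ.filter (fun i => ¬ (j i : ℕ) ≤ m - 2) with hTdef
  have hsumcard : ∑ i : Fin m, ε i = T.card := by
    rw [hTdef, Finset.card_filter]
    refine Finset.sum_congr rfl (fun i _ => ?_)
    simp only [hεdef]
    by_cases hc : (j i : ℕ) ≤ m - 2 <;> simp [hc]
  -- T.card ≤ m - 1
  have hT_le : T.card ≤ n - (m - 1) := by
    have := Finset.card_le_card_of_injOn (fun i => (j i : ℕ)) (s := T)
      (t := Finset.Ico (m - 1) n) ?_ ?_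
    · simpa using this
    · intro i hi
      simp only [hTdef, Finset.mem_coe, Finset.mem_filter] at hi
      simp only [Finset.mem_coe, Finset.mem_Ico]
      exact ⟨by omega, (j i).isLt⟩
    · intro a _ b _ hab
      exact hj (Fin.val_injective hab)
  -- complement: S.card ≤ m - 1, so T.card ≥ 1
  have hS_le : (Finset.univ.filter (fun i => (j i : ℕ) ≤ m - 2)).card ≤ m - 1 := by
    have := Finset.card_le_card_of_injOn (fun i => (j i : ℕ))
      (s := Finset.univ.filter (fun i => (j i : ℕ) ≤ m - 2))
      (t := Finset.range (m - 1)) ?_ ?_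
    · simpa using this
    · intro i hi
      simp only [Finset.mem_coe, Finset.mem_filter] at hi
      simp only [Finset.mem_coe, Finset.mem_range]
      omega
    · intro a _ b _ hab
      exact hj (Fin.val_injective hab)
  have hsplit : (Finset.univ.filter (fun i => (j i : ℕ) ≤ m - 2)).card + T.card = m := by
    rw [hTdef]
    simpa using Finset.card_filter_add_card_filter_not
      (s := (Finset.univ : Finset (Fin m))) (p := fun i => (j i : ℕ) ≤ m - 2)
  rw [hsumcard] at hdvd
  have h1 : 1 ≤ T.card := by omega
  have h2 : T.card ≤ m - 1 := by omega
  have := Nat.le_of_dvd (by omega) hdvd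
  omega
end

section
/- Let L be a Latin array of order n and let D be a diagonal of L of weight w containing a fixed cell (r,r). Then L contains a diagonal of weight at least w containing the cell (r,r) in which every symbol appears at most twice. -/
/-- A Latin array: no symbol repeated in any row or any column. -/
def IsLatinArray {n : ℕ} {S : Type*} (L : Fin n → Fin n → S) : Prop :=
  (∀ i, Function.Injective (L i)) ∧ (∀ j, Function.Injective fun i => L i j)

/-- The weight of the diagonal of `L` given by a permutation `σ`:
the number of distinct symbols among `L i (σ i)`. -/
noncomputable def diagWeight {n : ℕ} {S : Type*} (L : Fin n → Fin n → S)
    (σ : Equiv.Perm (Fin n)) : ℕ :=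
  (Set.range fun i => L i (σ i)).ncard

open Finset

namespace Stmt4Aux

variable {n : ℕ} {S : Type*} [DecidableEq S]

def cnt (L : Fin n → Fin n → S) (τ : Equiv.Perm (Fin n)) (t : S) : ℕ :=
  #(Finset.univ.filter fun m => L m (τ m) = t)

def rng (L : Fin n → Fin n → S) (τ : Equiv.Perm (Fin n)) : Finset S :=
  Finset.univ.image fun m => L m (τ m)

def badRows (L : Fin n → Fin n → S) (τ : Equiv.Perm (Fin n)) : Finset (Fin n) :=
  Finset.univ.filter fun m => 3 ≤ cnt L τ (L m (τ m))

lemma mem_rng_iff {L : Fin n → Fin n → S} {τ : Equiv.Perm (Fin n)} {t : S} :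
    t ∈ rng L τ ↔ 0 < cnt L τ t := by
  simp [rng, cnt, Finset.card_pos, Finset.filter_nonempty_iff]

lemma sym_mem_rng (L : Fin n → Fin n → S) (τ : Equiv.Perm (Fin n)) (m : Fin n) :
    L m (τ m) ∈ rng L τ := Finset.mem_image_of_mem _ (Finset.mem_univ m)

lemma le_cnt_of_sym {L : Fin n → Fin n → S} {τ : Equiv.Perm (Fin n)} (m : Fin n) :
    1 ≤ cnt L τ (L m (τ m)) := by
  have := sym_mem_rng L τ m
  rw [mem_rng_iff] at this
  omega

lemma sum_cnt (L : Fin n → Fin n → S) (τ : Equiv.Perm (Fin n)) :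
    ∑ t ∈ rng L τ, cnt L τ t = n := by
  have h := Finset.card_eq_sum_card_fiberwise
    (f := fun m => L m (τ m)) (s := Finset.univ) (t := rng L τ)
    (fun x _ => Finset.mem_image_of_mem _ (Finset.mem_univ x))
  simpa [cnt] using h.symm

lemma diag_eq (L : Fin n → Fin n → S) (τ : Equiv.Perm (Fin n)) :
    diagWeight L τ = #(rng L τ) := by
  rw [diagWeight]
  have h : (Set.range fun i => L i (τ i)) = ↑(rng L τ) := by
    ext t; simp [rng, eq_comm]
  rw [h, Set.ncard_coe_finset]

lemma set_eq (L : Fin n → Fin n → S) (τ : Equiv.Perm (Fin n)) (t : S) :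
    {i : Fin n | L i (τ i) = t}.ncard = cnt L τ t := by
  have h : {i : Fin n | L i (τ i) = t} = ↑(Finset.univ.filter fun m => L m (τ m) = t) := by
    ext m; simp
  rw [h, Set.ncard_coe_finset, cnt]

end Stmt4Aux
namespace Stmt4Aux

variable {n : ℕ} {S : Type*} [DecidableEq S]

lemma step (L : Fin n → Fin n → S) (hL : IsLatinArray L) (r : Fin n)
    (τ : Equiv.Perm (Fin n)) (hτ : τ r = r) (hne : (badRows L τ).Nonempty) :
    ∃ τ' : Equiv.Perm (Fin n), τ' r = r ∧
      #(rng L τ) ≤ #(rng L τ') ∧ #(badRows L τ') < #(badRows L τ) := by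
  obtain ⟨m0, hm0⟩ := hne
  rw [badRows, Finset.mem_filter] at hm0
  set s : S := L m0 (τ m0) with hs_def
  have hs3 : 3 ≤ cnt L τ s := hm0.2
  set A : Finset (Fin n) := Finset.univ.filter (fun m => L m (τ m) = s) with hA_def
  have hAcard : #A = cnt L τ s := rfl
  -- choose i ∈ A, i ≠ r
  have hAe : 0 < #(A.erase r) := by
    have h1 := Finset.pred_card_le_card_erase (s := A) (a := r)
    omega
  obtain ⟨i, hi⟩ := Finset.card_pos.1 hAe
  have hir : i ≠ r := (Finset.mem_erase.1 hi).1
  have hiA : L i (τ i) = s := (Finset.mem_filter.1 (Finset.mem_erase.1 hi).2).2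
  -- candidate set C
  set C : Finset (Fin n) := (Finset.univ.erase r).erase i with hC_def
  have hCcard : #C = n - 2 := by
    rw [hC_def, Finset.card_erase_of_mem (Finset.mem_erase.2 ⟨hir, Finset.mem_univ i⟩),
      Finset.card_erase_of_mem (Finset.mem_univ r)]
    simp [Finset.card_univ]
    omega
  have hn3 : 3 ≤ n := by
    have : cnt L τ s ≤ n := by
      have := Finset.card_le_card (Finset.filter_subset (fun m => L m (τ m) = s) Finset.univ)
      simpa [cnt] using this
    omega
  -- bad candidate sets
  set Bad1 : Finset (Fin n) := C.filter (fun j => 0 < cnt L τ (L i (τ j))) with hB1_def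
  set Bad2 : Finset (Fin n) := C.filter (fun j => 2 ≤ cnt L τ (L j (τ i))) with hB2_def
  set Q : Finset S := ((rng L τ).erase s).filter (fun t => 2 ≤ cnt L τ t) with hQ_def
  have hB1card : #Bad1 ≤ #((rng L τ).erase s) := by
    apply Finset.card_le_card_of_injOn (fun j => L i (τ j))
    · intro j hj
      rw [hB1_def, Finset.mem_coe, Finset.mem_filter] at hj
      refine Finset.mem_erase.2 ⟨?_, mem_rng_iff.2 hj.2⟩
      intro heq
      rw [← hiA] at heq
      exact (Finset.mem_erase.1 (hC_def ▸ hj.1)).1 (τ.injective (hL.1 i heq))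
    · intro x _ y _ hxy
      exact τ.injective (hL.1 i hxy)
  have hB2card : #Bad2 ≤ #Q := by
    apply Finset.card_le_card_of_injOn (fun j => L j (τ i))
    · intro j hj
      rw [hB2_def, Finset.mem_coe, Finset.mem_filter] at hj
      refine Finset.mem_filter.2 ⟨Finset.mem_erase.2 ⟨?_, mem_rng_iff.2 (by beta_reduce; omega)⟩, hj.2⟩
      intro heq
      rw [← hiA] at heq
      have : j = i := hL.2 (τ i) heq
      exact (Finset.mem_erase.1 (hC_def ▸ hj.1)).1 this
    · intro x _ y _ hxy
      exact hL.2 (τ i) hxy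
  -- counting bound
  have hQcount : #((rng L τ).erase s) + #Q + 3 ≤ n := by
    have hsum := sum_cnt L τ
    have hs_mem : s ∈ rng L τ := hs_def ▸ sym_mem_rng L τ m0
    rw [← Finset.add_sum_erase _ _ hs_mem] at hsum
    set E : Finset S := (rng L τ).erase s with hE_def
    have hsplit : ∑ t ∈ E.filter (fun t => 2 ≤ cnt L τ t), cnt L τ t
        + ∑ t ∈ E.filter (fun t => ¬ 2 ≤ cnt L τ t), cnt L τ t = ∑ t ∈ E, cnt L τ t :=
      Finset.sum_filter_add_sum_filter_not E _ _
    have h1 : ∑ t ∈ Q, (2:ℕ) ≤ ∑ t ∈ Q, cnt L τ t :=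
      Finset.sum_le_sum (fun t ht => (Finset.mem_filter.1 ht).2)
    have h2 : ∑ t ∈ E.filter (fun t => ¬ 2 ≤ cnt L τ t), (1:ℕ)
        ≤ ∑ t ∈ E.filter (fun t => ¬ 2 ≤ cnt L τ t), cnt L τ t := by
      refine Finset.sum_le_sum (fun t ht => ?_)
      have : t ∈ rng L τ := Finset.mem_of_mem_erase (hE_def ▸ (Finset.mem_filter.1 ht).1)
      exact mem_rng_iff.1 this
    rw [Finset.sum_const, smul_eq_mul] at h1 h2
    have hcards : #Q + #(E.filter (fun t => ¬ 2 ≤ cnt L τ t)) = #E := by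
      rw [hQ_def]
      exact Finset.card_filter_add_card_filter_not _
    have hQsum : ∑ t ∈ Q, cnt L τ t = ∑ t ∈ E.filter (fun t => 2 ≤ cnt L τ t), cnt L τ t := by
      rw [hQ_def]
    omega
  -- find a good j
  have hBu : #(Bad1 ∪ Bad2) < #C := by
    have := Finset.card_union_le Bad1 Bad2
    omega
  have hnotsub : ¬ C ⊆ Bad1 ∪ Bad2 :=
    fun hsub => absurd (Finset.card_le_card hsub) (not_le.2 hBu)
  obtain ⟨j, hjC, hjB⟩ := Finset.not_subset.1 hnotsub
  have hji : j ≠ i := (Finset.mem_erase.1 (hC_def ▸ hjC)).1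
  have hjr : j ≠ r := (Finset.mem_erase.1 (Finset.mem_erase.1 (hC_def ▸ hjC)).2).1
  have hjB1 : cnt L τ (L i (τ j)) = 0 := by
    by_contra h
    exact hjB (Finset.mem_union_left _ (Finset.mem_filter.2 ⟨hjC, by omega⟩))
  have hjB2 : cnt L τ (L j (τ i)) ≤ 1 := by
    by_contra h
    exact hjB (Finset.mem_union_right _ (Finset.mem_filter.2 ⟨hjC, by omega⟩))
  set a : S := L i (τ j) with ha_def
  set b : S := L j (τ i) with hb_def
  set y : S := L j (τ j) with hy_def
  have ha_not : ∀ m : Fin n, L m (τ m) ≠ a := by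
    intro m hm
    have h1 : 1 ≤ cnt L τ (L m (τ m)) := le_cnt_of_sym m
    rw [hm] at h1
    omega
  have hb_ne_s : b ≠ s := by
    intro h; rw [h] at hjB2; omega
  -- the new permutation
  set τ' : Equiv.Perm (Fin n) := (Equiv.swap i j).trans τ with hτ'_def
  have hτ'i : τ' i = τ j := by simp [hτ'_def, Equiv.swap_apply_left]
  have hτ'j : τ' j = τ i := by simp [hτ'_def, Equiv.swap_apply_right]
  have hτ'other : ∀ m, m ≠ i → m ≠ j → τ' m = τ m := by
    intro m h1 h2; simp [hτ'_def, Equiv.swap_apply_of_ne_of_ne h1 h2]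
  have hτ'r : τ' r = r := by
    rw [hτ'other r (Ne.symm hir) (Ne.symm hjr)]; exact hτ
  -- counts with respect to τ'
  have hfilter_sub : ∀ t : S, t ≠ a → t ≠ b →
      (Finset.univ.filter fun m => L m (τ' m) = t)
        ⊆ (Finset.univ.filter fun m => L m (τ m) = t) := by
    intro t hta htb m hm
    rw [Finset.mem_filter] at hm ⊢
    refine ⟨hm.1, ?_⟩
    rcases eq_or_ne m i with rfl | hmi
    · rw [hτ'i] at hm; exact absurd hm.2.symm hta
    rcases eq_or_ne m j with rfl | hmj
    · rw [hτ'j] at hm; exact absurd hm.2.symm htb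
    · rw [hτ'other m hmi hmj] at hm; exact hm.2
  have hcnt_le : ∀ t : S, t ≠ a → t ≠ b → cnt L τ' t ≤ cnt L τ t := fun t h1 h2 =>
    Finset.card_le_card (hfilter_sub t h1 h2)
  have hcnt'a : cnt L τ' a ≤ 2 := by
    have hsub : (Finset.univ.filter fun m => L m (τ' m) = a) ⊆ {i, j} := by
      intro m hm
      rw [Finset.mem_filter] at hm
      rcases eq_or_ne m i with rfl | hmi
      · exact Finset.mem_insert_self _ _
      rcases eq_or_ne m j with rfl | hmj
      · simp
      · rw [hτ'other m hmi hmj] at hm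
        exact absurd hm.2 (ha_not m)
    refine le_trans (Finset.card_le_card hsub) ?_
    refine le_trans (Finset.card_insert_le _ _) ?_
    simp
  have hcnt'b : cnt L τ' b ≤ 2 := by
    rcases eq_or_ne a b with hab | hab
    · rw [← hab]; exact hcnt'a
    have hsub : (Finset.univ.filter fun m => L m (τ' m) = b)
        ⊆ insert j (Finset.univ.filter fun m => L m (τ m) = b) := by
      intro m hm
      rw [Finset.mem_filter] at hm
      rcases eq_or_ne m i with rfl | hmi
      · rw [hτ'i] at hm; exact absurd hm.2 hab
      rcases eq_or_ne m j with rfl | hmj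
      · exact Finset.mem_insert_self _ _
      · rw [hτ'other m hmi hmj] at hm
        exact Finset.mem_insert_of_mem (Finset.mem_filter.2 ⟨hm.1, hm.2⟩)
    refine le_trans (Finset.card_le_card hsub) (le_trans (Finset.card_insert_le _ _) ?_)
    have : #(Finset.univ.filter fun m => L m (τ m) = b) = cnt L τ b := rfl
    omega
  -- bad rows strictly decrease
  have hbadsub : badRows L τ' ⊆ (badRows L τ).erase i := by
    intro m hm
    rw [badRows, Finset.mem_filter] at hm
    have hmi : m ≠ i := by
      intro h
      rw [h, hτ'i] at hm
      have h2 : (3:ℕ) ≤ cnt L τ' a := hm.2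
      omega
    have hmj : m ≠ j := by
      intro h
      rw [h, hτ'j] at hm
      have h2 : (3:ℕ) ≤ cnt L τ' b := hm.2
      omega
    rw [hτ'other m hmi hmj] at hm
    have hta : L m (τ m) ≠ a := ha_not m
    have htb : L m (τ m) ≠ b := by
      intro h
      rw [h] at hm
      omega
    have h3 : 3 ≤ cnt L τ (L m (τ m)) := le_trans hm.2 (hcnt_le _ hta htb)
    exact Finset.mem_erase.2 ⟨hmi, Finset.mem_filter.2 ⟨Finset.mem_univ m, h3⟩⟩
  have hi_bad : i ∈ badRows L τ :=
    Finset.mem_filter.2 ⟨Finset.mem_univ i, by rw [hiA]; exact hs3⟩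
  have hbadcard : #(badRows L τ') < #(badRows L τ) := by
    have h1 := Finset.card_le_card hbadsub
    rw [Finset.card_erase_of_mem hi_bad] at h1
    have h2 : 0 < #(badRows L τ) := Finset.card_pos.2 ⟨i, hi_bad⟩
    omega
  -- the range does not shrink
  have hs_in' : s ∈ rng L τ' := by
    have hcard : 0 < #((A.erase i).erase j) := by
      have e1 := Finset.pred_card_le_card_erase (s := A) (a := i)
      have e2 := Finset.pred_card_le_card_erase (s := A.erase i) (a := j)
      omega
    obtain ⟨m, hm⟩ := Finset.card_pos.1 hcard
    have hmj : m ≠ j := (Finset.mem_erase.1 hm).1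
    have hmi : m ≠ i := (Finset.mem_erase.1 (Finset.mem_erase.1 hm).2).1
    have hms : L m (τ m) = s :=
      (Finset.mem_filter.1 (Finset.mem_erase.1 (Finset.mem_erase.1 hm).2).2).2
    have hsym : L m (τ' m) = s := by rw [hτ'other m hmi hmj]; exact hms
    exact hsym ▸ sym_mem_rng L τ' m
  have hK : ∀ t ∈ rng L τ, t ≠ y → t ∈ rng L τ' := by
    intro t ht hty
    obtain ⟨m, _, hm⟩ := Finset.mem_image.1 ht
    rcases eq_or_ne m j with rfl | hmj
    · exact absurd hm.symm hty
    rcases eq_or_ne m i with rfl | hmi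
    · rw [hiA] at hm
      exact hm ▸ hs_in'
    · have hsym : L m (τ' m) = t := by rw [hτ'other m hmi hmj]; exact hm
      exact hsym ▸ sym_mem_rng L τ' m
  have hrng : #(rng L τ) ≤ #(rng L τ') := by
    rcases le_or_gt 2 (cnt L τ y) with hy2 | hy1
    · refine Finset.card_le_card (fun t ht => ?_)
      rcases eq_or_ne t y with hty | hty
      · rcases eq_or_ne t s with hts | hts
        · rw [hts]; exact hs_in'
        · have hcard : 0 < #((Finset.univ.filter fun m => L m (τ m) = t).erase j) := by
            have e1 := Finset.pred_card_le_card_erase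
              (s := Finset.univ.filter fun m => L m (τ m) = t) (a := j)
            have e2 : #(Finset.univ.filter fun m => L m (τ m) = t) = cnt L τ t := rfl
            have e3 : 2 ≤ cnt L τ t := by rw [hty]; exact hy2
            omega
          obtain ⟨m, hm⟩ := Finset.card_pos.1 hcard
          have hmj : m ≠ j := (Finset.mem_erase.1 hm).1
          have hms : L m (τ m) = t := (Finset.mem_filter.1 (Finset.mem_erase.1 hm).2).2
          have hmi : m ≠ i := by
            intro h
            rw [h, hiA] at hms
            exact hts hms.symm
          have hsym : L m (τ' m) = t := by rw [hτ'other m hmi hmj]; exact hms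
          exact hsym ▸ sym_mem_rng L τ' m
      · exact hK t ht hty
    · have ha_rng : a ∉ rng L τ := by
        intro h
        rw [mem_rng_iff] at h
        omega
      have hy_in : y ∈ rng L τ := sym_mem_rng L τ j
      have hsub2 : insert a ((rng L τ).erase y) ⊆ rng L τ' := by
        intro t ht
        rcases Finset.mem_insert.1 ht with hta | ht'
        · rw [hta]
          have hsym : L i (τ' i) = a := by rw [hτ'i]
          exact hsym ▸ sym_mem_rng L τ' i
        · exact hK t (Finset.mem_of_mem_erase ht') (Finset.mem_erase.1 ht').1
      have h1 : #(insert a ((rng L τ).erase y)) = #((rng L τ).erase y) + 1 :=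
        Finset.card_insert_of_notMem (fun h => ha_rng (Finset.mem_of_mem_erase h))
      have h2 : #((rng L τ).erase y) = #(rng L τ) - 1 := Finset.card_erase_of_mem hy_in
      have h3 : 0 < #(rng L τ) := Finset.card_pos.2 ⟨y, hy_in⟩
      have h4 := Finset.card_le_card hsub2
      omega
  exact ⟨τ', hτ'r, hrng, hbadcard⟩

end Stmt4Aux
namespace Stmt4Aux

variable {n : ℕ} {S : Type*} [DecidableEq S]

lemma no_bad (L : Fin n → Fin n → S) {τ : Equiv.Perm (Fin n)}
    (h : badRows L τ = ∅) (t : S) : cnt L τ t ≤ 2 := by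
  by_contra hc
  push_neg at hc
  have h0 : 0 < cnt L τ t := by omega
  obtain ⟨m, hm⟩ := Finset.card_pos.1 h0
  rw [Finset.mem_filter] at hm
  have : m ∈ badRows L τ := by
    rw [badRows, Finset.mem_filter, hm.2]
    exact ⟨Finset.mem_univ m, by omega⟩
  rw [h] at this
  exact absurd this (Finset.notMem_empty m)

lemma reach (L : Fin n → Fin n → S) (hL : IsLatinArray L) (r : Fin n) :
    ∀ N : ℕ, ∀ τ : Equiv.Perm (Fin n), τ r = r → #(badRows L τ) ≤ N →
    ∃ τ' : Equiv.Perm (Fin n), τ' r = r ∧ #(rng L τ) ≤ #(rng L τ') ∧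
      ∀ t : S, cnt L τ' t ≤ 2 := by
  intro N
  induction N with
  | zero =>
    intro τ hτ h0
    refine ⟨τ, hτ, le_rfl, no_bad L ?_⟩
    rw [← Finset.card_eq_zero]
    omega
  | succ N ih =>
    intro τ hτ hN
    rcases Finset.eq_empty_or_nonempty (badRows L τ) with he | hne
    · exact ⟨τ, hτ, le_rfl, no_bad L he⟩
    · obtain ⟨τ1, h1, h2, h3⟩ := step L hL r τ hτ hne
      obtain ⟨τ', h4, h5, h6⟩ := ih τ1 h1 (by omega)
      exact ⟨τ', h4, le_trans h2 h5, h6⟩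

end Stmt4Aux

theorem stmt_4 {n : ℕ} {S : Type*} (L : Fin n → Fin n → S) (hL : IsLatinArray L)
    (σ : Equiv.Perm (Fin n)) (r : Fin n) (hr : σ r = r) (w : ℕ) (hw : diagWeight L σ = w) :
    ∃ τ : Equiv.Perm (Fin n), τ r = r ∧ w ≤ diagWeight L τ ∧
      ∀ s : S, {i : Fin n | L i (τ i) = s}.ncard ≤ 2 := by
  classical
  obtain ⟨τ, h1, h2, h3⟩ :=
    Stmt4Aux.reach L hL r #(Stmt4Aux.badRows L σ) σ hr le_rfl
  refine ⟨τ, h1, ?_, ?_⟩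
  · rw [← hw, Stmt4Aux.diag_eq L σ, Stmt4Aux.diag_eq L τ]
    exact h2
  · intro s
    rw [Stmt4Aux.set_eq L τ s]
    exact h3 s
end

section
/- Every Latin array of order n contains a partial transversal of length at least ⌈n/2⌉. -/
/-- `L` has a partial transversal of length `k`. -/
def HasPT {n : ℕ} {S : Type*} (L : Fin n → Fin n → S) (k : ℕ) : Prop :=
  ∃ r c : Fin k → Fin n, Function.Injective r ∧ Function.Injective c ∧
    Function.Injective (fun x => L (r x) (c x))

theorem stmt_7 {n : ℕ} {S : Type*} (L : Fin n → Fin n → S) (hL : IsLatinArray L) :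
    HasPT L ((n + 1) / 2) := by
  classical
  obtain ⟨hrow, hcol⟩ := hL
  let Good : Finset (Fin n × Fin n) → Prop := fun T =>
    Set.InjOn Prod.fst (T : Set (Fin n × Fin n)) ∧ Set.InjOn Prod.snd (T : Set (Fin n × Fin n)) ∧
      Set.InjOn (fun p : Fin n × Fin n => L p.1 p.2) (T : Set (Fin n × Fin n))
  let s : Finset (Finset (Fin n × Fin n)) := Finset.univ.filter Good
  have hne : s.Nonempty := ⟨∅, by
    simp only [s, Finset.mem_filter, Finset.mem_univ, true_and]
    refine ⟨?_, ?_, ?_⟩ <;> simp [Set.InjOn]⟩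
  obtain ⟨T, hTs, hTmax⟩ := s.exists_max_image Finset.card hne
  obtain ⟨hT1, hT2, hT3⟩ : Good T := (Finset.mem_filter.mp hTs).2
  -- T gives a partial transversal of length T.card
  have hPT : HasPT L T.card := by
    let e := T.equivFin
    refine ⟨fun x => (e.symm x).1.1, fun x => (e.symm x).1.2, ?_, ?_, ?_⟩
    · intro x y h
      exact e.symm.injective (Subtype.ext (hT1 (e.symm x).2 (e.symm y).2 h))
    · intro x y h
      exact e.symm.injective (Subtype.ext (hT2 (e.symm x).2 (e.symm y).2 h))
    · intro x y h
      exact e.symm.injective (Subtype.ext (hT3 (e.symm x).2 (e.symm y).2 h))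
  -- the maximal transversal has size ≥ n/2
  have hbound : n ≤ 2 * T.card := by
    by_contra hlt
    push_neg at hlt
    have himg : (T.image Prod.fst).card < n :=
      lt_of_le_of_lt Finset.card_image_le (by omega)
    have hne' : ((T.image Prod.fst)ᶜ).Nonempty := by
      rw [← Finset.card_pos, Finset.card_compl, Fintype.card_fin]
      omega
    obtain ⟨r, hr'⟩ := hne'
    have hr : r ∉ T.image Prod.fst := Finset.mem_compl.mp hr'
    set C : Finset (Fin n) := Finset.univ \ T.image Prod.snd with hC
    have hCcard : T.card < C.card := by
      have h1 : (T.image Prod.snd).card ≤ T.card := Finset.card_image_le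
      have h2 : C.card = n - (T.image Prod.snd).card := by
        rw [hC, Finset.card_sdiff_of_subset (Finset.subset_univ _), Finset.card_univ,
          Fintype.card_fin]
      omega
    -- every unused column carries a symbol already in T (else extend T)
    have hex : ∀ c ∈ C, ∃ p ∈ T, L p.1 p.2 = L r c := by
      intro c hc
      by_contra hno
      push_neg at hno
      have hcnotin : c ∉ T.image Prod.snd := by
        rw [hC, Finset.mem_sdiff] at hc; exact hc.2
      have hrcT : (r, c) ∉ T := fun h => hr (Finset.mem_image_of_mem Prod.fst h)
      have hGood' : Good (insert (r, c) T) := by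
        have hco : (↑(insert (r, c) T) : Set (Fin n × Fin n)) = insert (r, c) ↑T := by
          simp
        refine ⟨?_, ?_, ?_⟩ <;> rw [hco] <;>
          rintro a (rfl | ha) b (rfl | hb) hab
        · rfl
        · refine absurd ?_ hr; rw [show r = b.1 from hab]
          exact Finset.mem_image_of_mem Prod.fst hb
        · refine absurd ?_ hr; rw [show r = a.1 from hab.symm]
          exact Finset.mem_image_of_mem Prod.fst ha
        · exact hT1 ha hb hab
        · rfl
        · refine absurd ?_ hcnotin; rw [show c = b.2 from hab]
          exact Finset.mem_image_of_mem Prod.snd hb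
        · refine absurd ?_ hcnotin; rw [show c = a.2 from hab.symm]
          exact Finset.mem_image_of_mem Prod.snd ha
        · exact hT2 ha hb hab
        · rfl
        · exact absurd hab.symm (hno b hb)
        · exact absurd hab (hno a ha)
        · exact hT3 ha hb hab
      have hmem : insert (r, c) T ∈ s := by
        simp only [s, Finset.mem_filter, Finset.mem_univ, true_and]
        exact hGood'
      have := hTmax _ hmem
      rw [Finset.card_insert_of_notMem hrcT] at this
      omega
    -- inject unused columns into T
    choose f hfT hfsym using hex
    have hle : C.card ≤ T.card := by
      have hn0 : 0 < n := Fin.pos r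
      refine Finset.card_le_card_of_injOn
        (fun c => if h : c ∈ C then f c h else (r, r)) ?_ ?_
      · intro c hc
        simp only [dif_pos (show c ∈ C from hc)]
        exact hfT c hc
      · intro c1 h1 c2 h2 hf
        have h1' : c1 ∈ C := h1
        have h2' : c2 ∈ C := h2
        simp only [dif_pos h1', dif_pos h2'] at hf
        have : L r c1 = L r c2 := by
          rw [← hfsym c1 h1', ← hfsym c2 h2', hf]
        exact hrow r this
    omega
  -- shrink to length (n+1)/2
  obtain ⟨rr, cc, h1, h2, h3⟩ := hPT
  have hk : (n + 1) / 2 ≤ T.card := by omega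
  exact ⟨fun x => rr (Fin.castLE hk x), fun x => cc (Fin.castLE hk x),
    h1.comp (Fin.castLE_injective hk), h2.comp (Fin.castLE_injective hk),
    h3.comp (Fin.castLE_injective hk)⟩
end

section
/- Let E be an n×n array that has no partial transversal of length n-1 (i.e., no n-1 cells in distinct rows and columns with distinct symbols). Form an (n+1)×(n+1) array A by adding one new row and one new column to E, filled with 2n+1 symbols that are pairwise distinct and do not appear in E. Then A has no transversal. -/
theorem stmt_9 {n : ℕ} (hn : 1 ≤ n) {S : Type*} (E : Fin n → Fin n → S)
    (hE : ¬ ∃ r c : Fin (n - 1) → Fin n, Function.Injective r ∧ Function.Injective c ∧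
      Function.Injective (fun x => E (r x) (c x)))
    (A : Fin (n + 1) → Fin (n + 1) → S)
    (hrestrict : ∀ i j : Fin n, A i.castSucc j.castSucc = E i j)
    (hfresh : ∀ p q : Fin (n + 1) × Fin (n + 1),
      (p.1 = Fin.last n ∨ p.2 = Fin.last n) → (q.1 = Fin.last n ∨ q.2 = Fin.last n) →
      A p.1 p.2 = A q.1 q.2 → p = q)
    (hnew : ∀ p : Fin (n + 1) × Fin (n + 1), (p.1 = Fin.last n ∨ p.2 = Fin.last n) →
      ∀ i j : Fin n, A p.1 p.2 ≠ E i j) :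
    ¬ ∃ σ : Equiv.Perm (Fin (n + 1)), Function.Injective (fun i => A i (σ i)) := by
  rintro ⟨σ, hσ⟩
  apply hE
  classical
  set B : Finset (Fin (n + 1)) :=
    Finset.univ.filter (fun i => i ≠ Fin.last n ∧ σ i ≠ Fin.last n) with hB
  have hcard : n - 1 ≤ B.card := by
    have hsub : Bᶜ ⊆ {Fin.last n, σ.symm (Fin.last n)} := by
      intro i hi
      simp only [hB, Finset.mem_compl, Finset.mem_filter, Finset.mem_univ, true_and,
        not_and_or, not_not] at hi
      rcases hi with h | h
      · simp [h]
      · have : σ.symm (Fin.last n) = i := by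
          rw [Equiv.symm_apply_eq, h]
        simp [← this]
    have h2 : Bᶜ.card ≤ 2 := by
      refine (Finset.card_le_card hsub).trans ?_
      exact (Finset.card_insert_le _ _).trans (by simp)
    have h3 : Bᶜ.card = Fintype.card (Fin (n + 1)) - B.card := Finset.card_compl B
    have h4 : B.card ≤ Fintype.card (Fin (n + 1)) := Finset.card_le_univ B
    simp [Fintype.card_fin] at h3 h4
    omega
  obtain ⟨f⟩ : Nonempty (Fin (n - 1) ↪ {i : Fin (n+1) // i ∈ B}) := by
    rw [Function.Embedding.nonempty_iff_card_le]
    simpa using hcard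
  have hprop : ∀ x, (f x).1 ≠ Fin.last n ∧ σ (f x).1 ≠ Fin.last n := by
    intro x
    have := (f x).2
    simp only [hB, Finset.mem_filter, Finset.mem_univ, true_and] at this
    exact this
  refine ⟨fun x => ((f x).1).castPred (hprop x).1,
    fun x => (σ (f x).1).castPred (hprop x).2, ?_, ?_, ?_⟩
  · intro x y h
    have h2 := congrArg Fin.castSucc h
    simp only [Fin.castSucc_castPred] at h2
    exact f.injective (Subtype.ext h2)
  · intro x y h
    have h2 := congrArg Fin.castSucc h
    simp only [Fin.castSucc_castPred] at h2
    exact f.injective (Subtype.ext (σ.injective h2))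
  · intro x y h
    simp only at h
    rw [← hrestrict, ← hrestrict, Fin.castSucc_castPred, Fin.castSucc_castPred,
      Fin.castSucc_castPred, Fin.castSucc_castPred] at h
    exact f.injective (Subtype.ext (hσ h))
end
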